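/- Let ρ be a symmetric probability measure on ℝ (i.e. ρ(−A) = ρ(A) for all Borel sets A). If ρ is l-weakly-diophantine, then liminf_{|b|→∞} |b|^{2l} |1 − |ρ̂(ib)|| > 0 (i.e. ρ is 2l-diophantine in the sense of Breuillard). -/
import Mathlib

open MeasureTheory

private lemma stmt11_cos_int (ρ : Measure ℝ) [IsProbabilityMeasure ρ] (b : ℝ) :
    Integrable (fun y : ℝ => Real.cos (b*y)) ρ := by
  apply (integrable_const (1:ℝ)).mono'
  · exact (Real.continuous_cos.comp (by continuity)).aestronglyMeasurable
  · filter_upwards with y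
    simpa using Real.abs_cos_le_one (b*y)

private lemma stmt11_key (ρ : Measure ℝ) [IsProbabilityMeasure ρ]
    (hsym : ρ.map (fun y => -y) = ρ) (b : ℝ) :
    (∫ y, Complex.exp (-(Complex.I * b) * (y:ℂ)) ∂ρ) = ((∫ y, Real.cos (b*y) ∂ρ : ℝ) : ℂ) := by
  have hexp : ∀ y : ℝ, Complex.exp (-(Complex.I * b) * (y:ℂ)) =
      (Real.cos (b*y) : ℂ) - (Real.sin (b*y) : ℂ) * Complex.I := by
    intro y
    rw [show -(Complex.I * b) * (y:ℂ) = ((-(b*y) : ℝ) : ℂ) * Complex.I by push_cast; ring]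
    rw [Complex.exp_mul_I, Complex.ofReal_neg, Complex.cos_neg, Complex.sin_neg,
      ← Complex.ofReal_cos, ← Complex.ofReal_sin]
    ring
  have hsin : Integrable (fun y : ℝ => Real.sin (b*y)) ρ := by
    apply (integrable_const (1:ℝ)).mono'
    · exact (Real.continuous_sin.comp (by continuity)).aestronglyMeasurable
    · filter_upwards with y
      simpa using Real.abs_sin_le_one (b*y)
  have hsin0 : ∫ y, Real.sin (b*y) ∂ρ = 0 := by
    have h : ∫ y, Real.sin (b*y) ∂ρ = ∫ y, Real.sin (b*(-y)) ∂ρ := by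
      conv_lhs => rw [← hsym]
      rw [integral_map measurable_neg.aemeasurable]
      exact (Real.continuous_sin.comp (by continuity)).aestronglyMeasurable
    simp only [mul_neg, Real.sin_neg] at h
    rw [integral_neg] at h
    linarith
  have hc : Integrable (fun y : ℝ => ((Real.cos (b*y) : ℝ) : ℂ)) ρ :=
    (stmt11_cos_int ρ b).ofReal
  have hs : Integrable (fun y : ℝ => ((Real.sin (b*y) : ℝ) : ℂ) * Complex.I) ρ :=
    hsin.ofReal.mul_const _
  have e1 : ∫ y, ((Real.cos (b*y) : ℝ):ℂ) ∂ρ = ((∫ y, Real.cos (b*y) ∂ρ : ℝ):ℂ) :=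
    integral_ofReal
  have e2 : ∫ y, ((Real.sin (b*y) : ℝ):ℂ) ∂ρ = ((∫ y, Real.sin (b*y) ∂ρ : ℝ):ℂ) :=
    integral_ofReal
  simp only [hexp]
  rw [integral_sub hc hs, integral_mul_const, e1, e2, hsin0]
  simp

theorem stmt11 (ρ : Measure ℝ) [IsProbabilityMeasure ρ]
    (hsym : ρ.map (fun y => -y) = ρ)
    (l : ℝ) (hl : 0 ≤ l)
    (hwd : ∃ c > (0:ℝ), ∃ B : ℝ, ∀ b : ℝ, B ≤ |b| →
      c ≤ |b| ^ l * ‖1 - ∫ y, Complex.exp (-(Complex.I * b) * (y : ℂ)) ∂ρ‖) :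
    ∃ c > (0:ℝ), ∃ B : ℝ, ∀ b : ℝ, B ≤ |b| →
      c ≤ |b| ^ (2 * l) * |1 - ‖∫ y, Complex.exp (-(Complex.I * b) * (y : ℂ)) ∂ρ‖| := by
  obtain ⟨c, hc, B, hB⟩ := hwd
  have hrle : ∀ b : ℝ, |∫ y, Real.cos (b*y) ∂ρ| ≤ 1 := by
    intro b
    have := norm_integral_le_of_norm_le_const (μ := ρ)
      (f := fun y : ℝ => Real.cos (b*y)) (C := 1)
      (by filter_upwards with y; simpa using Real.abs_cos_le_one (b*y))
    simpa using this
  have hD : ∀ b : ℝ, 1 - (∫ y, Real.cos (2*b*y) ∂ρ) ≤ 4 * (1 + ∫ y, Real.cos (b*y) ∂ρ) := by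
    intro b
    have i1 : Integrable (fun y : ℝ => 1 - Real.cos (2*b*y)) ρ :=
      (integrable_const 1).sub (stmt11_cos_int ρ (2*b))
    have i2 : Integrable (fun y : ℝ => 4*(1 + Real.cos (b*y))) ρ :=
      ((integrable_const 1).add (stmt11_cos_int ρ b)).const_mul 4
    have hmono : ∫ y, (1 - Real.cos (2*b*y)) ∂ρ ≤ ∫ y, 4*(1 + Real.cos (b*y)) ∂ρ := by
      apply integral_mono i1 i2
      intro y
      have h2 : Real.cos (2*b*y) = 2 * Real.cos (b*y)^2 - 1 := by
        rw [mul_assoc]; exact Real.cos_two_mul (b*y)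
      simp only
      nlinarith [Real.neg_one_le_cos (b*y), Real.cos_le_one (b*y)]
    rw [integral_sub (integrable_const 1) (stmt11_cos_int ρ (2*b)),
      integral_const_mul, integral_add (integrable_const 1) (stmt11_cos_int ρ b)] at hmono
    simpa [measure_univ] using hmono
  refine ⟨c / (4 * 2 ^ l), by positivity, max B 1, ?_⟩
  intro b hb
  have hb1 : (1:ℝ) ≤ |b| := le_trans (le_max_right _ _) hb
  have hbB : B ≤ |b| := le_trans (le_max_left _ _) hb
  have hb2B : B ≤ |2*b| := by rw [abs_mul, abs_two]; linarith [abs_nonneg b]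
  have h1 := hB b hbB
  have h2 := hB (2*b) hb2B
  rw [stmt11_key ρ hsym] at h1 h2 ⊢
  have hnorm : ∀ s : ℝ, ‖(1:ℂ) - (s:ℂ)‖ = |1 - s| := by
    intro s
    rw [show (1:ℂ) - (s:ℂ) = ((1 - s : ℝ):ℂ) by push_cast; ring, Complex.norm_real]
    exact Real.norm_eq_abs _
  rw [hnorm] at h1 h2
  rw [Complex.norm_real, Real.norm_eq_abs]
  have hDb := hD b
  have hr1le := hrle b
  have hr2le := hrle (2*b)
  obtain ⟨r1, hr1eq⟩ : ∃ x, ∫ y, Real.cos (b*y) ∂ρ = x := ⟨_, rfl⟩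
  obtain ⟨r2, hr2eq⟩ : ∃ x, ∫ y, Real.cos (2*b*y) ∂ρ = x := ⟨_, rfl⟩
  rw [hr1eq] at h1 hDb hr1le ⊢
  rw [hr2eq] at h2 hDb hr2le
  obtain ⟨hr1a, hr1b⟩ := abs_le.mp hr1le
  obtain ⟨hr2a, hr2b⟩ := abs_le.mp hr2le
  rw [abs_of_nonneg (by linarith : (0:ℝ) ≤ 1 - r1)] at h1
  rw [abs_of_nonneg (by linarith : (0:ℝ) ≤ 1 - r2)] at h2
  set t : ℝ := |b| ^ l with ht
  have ht1 : 1 ≤ t := Real.one_le_rpow hb1 hl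
  have htwol : (1:ℝ) ≤ 2 ^ l := Real.one_le_rpow (by norm_num) hl
  have h2' : c ≤ 2 ^ l * t * (1 - r2) := by
    have e : |2*b| ^ l = 2 ^ l * t := by
      rw [abs_mul, abs_two, Real.mul_rpow (by norm_num) (abs_nonneg b)]
    rw [e] at h2; linarith [h2]
  have hpow : |b| ^ (2*l) = t * t := by
    rw [two_mul, Real.rpow_add (by linarith : (0:ℝ) < |b|)]
  rw [hpow, abs_of_nonneg (by linarith [abs_le.mpr ⟨hr1a, hr1b⟩] : (0:ℝ) ≤ 1 - |r1|)]
  rcases le_or_gt 0 r1 with hrb | hrb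
  · rw [abs_of_nonneg hrb]
    have key : c ≤ t * t * (1 - r1) := by nlinarith
    rw [div_le_iff₀ (by positivity)]
    nlinarith
  · rw [abs_of_neg hrb]
    have key : c ≤ 4 * (2 ^ l * t) * (1 + r1) := by
      nlinarith [mul_le_mul_of_nonneg_left hDb (by positivity : (0:ℝ) ≤ 2 ^ l * t)]
    rw [div_le_iff₀ (by positivity)]
    nlinarith [mul_nonneg (mul_nonneg (by linarith : (0:ℝ) ≤ t) (by linarith : (0:ℝ) ≤ t)) (by nlinarith : (0:ℝ) ≤ 1 + r1), key, ht1, htwol]
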